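/- The only rational fixed points of the Minkowski question mark function on [0,1] are 0, 1/2, and 1. -/

import Mathlib

open scoped Classical

/-- The Gauss map `x ↦ {1/x}`. -/
noncomputable def gaussMap (x : ℝ) : ℝ := Int.fract x⁻¹

/-- `cfDigit x n` is the `(n+1)`-st partial quotient `a_{n+1}` of the continued
fraction expansion `x = [a_1, a_2, …]` of `x ∈ (0,1)`. -/
noncomputable def cfDigit (x : ℝ) (n : ℕ) : ℤ := ⌊(gaussMap^[n] x)⁻¹⌋

/-- The Minkowski question mark function, via the Denjoy–Salem series
`?(x) = ∑_{k≥1} (-1)^{k+1} / 2^{a_1+⋯+a_k-1}` (a finite sum for rational `x`). -/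
noncomputable def minkowskiQ (x : ℝ) : ℝ :=
  ∑' k : ℕ, if ∀ i ≤ k, 0 < cfDigit x i then
      (-1 : ℝ) ^ k / (2 : ℝ) ^ ((∑ i ∈ Finset.range (k + 1), cfDigit x i) - 1)
    else 0

/-- Rational version of the Gauss map. -/
def gaussMapQ (x : ℚ) : ℚ := Int.fract x⁻¹

lemma gaussMap_cast (x : ℚ) : gaussMap (x : ℝ) = ((gaussMapQ x : ℚ) : ℝ) := by
  simp [gaussMap, gaussMapQ, Rat.cast_fract, Rat.cast_inv]

lemma iterate_cast (x : ℚ) (n : ℕ) :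
    gaussMap^[n] (x : ℝ) = ((gaussMapQ^[n] x : ℚ) : ℝ) := by
  induction n with
  | zero => simp
  | succ n ih =>
      rw [Function.iterate_succ_apply', Function.iterate_succ_apply', ih, gaussMap_cast]

lemma cfDigit_cast (x : ℚ) (n : ℕ) : cfDigit (x : ℝ) n = ⌊(gaussMapQ^[n] x)⁻¹⌋ := by
  rw [cfDigit, iterate_cast, ← Rat.cast_inv, Rat.floor_cast]

lemma gaussMapQ_nonneg (x : ℚ) : 0 ≤ gaussMapQ x := Int.fract_nonneg _

lemma gaussMapQ_lt_one (x : ℚ) : gaussMapQ x < 1 := Int.fract_lt_one _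

lemma exists_iter_zero : ∀ n : ℕ, ∀ x : ℚ, x.num.toNat = n → 0 ≤ x → x < 1 →
    ∃ N, gaussMapQ^[N] x = 0 := by
  intro n
  induction n using Nat.strong_induction_on with
  | _ n ih =>
    intro x hn h0 h1
    rcases eq_or_lt_of_le h0 with h | h
    · exact ⟨0, h.symm⟩
    · have hy : (gaussMapQ x).num < x.num := Rat.fract_inv_num_lt_num_of_pos h
      have hlt : (gaussMapQ x).num.toNat < n := by
        rw [← hn]
        have := Rat.num_pos.mpr h
        omega
      obtain ⟨N, hN⟩ := ih _ hlt (gaussMapQ x) rfl (gaussMapQ_nonneg x) (gaussMapQ_lt_one x)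
      exact ⟨N + 1, by rwa [Function.iterate_succ_apply]⟩

/-- The summand of the Denjoy–Salem series. -/
noncomputable def mterm (x : ℝ) (k : ℕ) : ℝ :=
  if ∀ i ≤ k, 0 < cfDigit x i then
      (-1 : ℝ) ^ k / (2 : ℝ) ^ ((∑ i ∈ Finset.range (k + 1), cfDigit x i) - 1)
    else 0

lemma minkowskiQ_eq_tsum (x : ℝ) : minkowskiQ x = ∑' k, mterm x k := rfl

lemma mterm_eq_zero {x : ℚ} {N : ℕ} (hN : gaussMapQ^[N] x = 0) {k : ℕ} (hk : N ≤ k) :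
    mterm (x : ℝ) k = 0 := by
  rw [mterm, if_neg]
  intro h
  have := h N hk
  rw [cfDigit_cast, hN] at this
  simp at this

lemma minkowskiQ_eq_sum {x : ℚ} {N : ℕ} (hN : gaussMapQ^[N] x = 0) :
    minkowskiQ (x : ℝ) = ∑ k ∈ Finset.range N, mterm (x : ℝ) k := by
  rw [minkowskiQ_eq_tsum]
  exact tsum_eq_sum (fun k hk => mterm_eq_zero hN (by simpa using hk))

lemma minkowskiQ_zero : minkowskiQ ((0 : ℚ) : ℝ) = 0 := by
  simpa using minkowskiQ_eq_sum (x := 0) (N := 0) rfl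

lemma mterm_zero_eq {x : ℚ} (h0 : 0 < x) (h1 : x < 1) :
    mterm (x : ℝ) 0 = (2 : ℝ) ^ ((1 : ℤ) - ⌊x⁻¹⌋) := by
  have hd : cfDigit (x : ℝ) 0 = ⌊x⁻¹⌋ := by simpa using cfDigit_cast x 0
  have ha : (1 : ℤ) ≤ ⌊x⁻¹⌋ := by
    rw [Int.le_floor]
    push_cast
    exact one_le_inv_iff₀.mpr ⟨h0, h1.le⟩
  rw [mterm, if_pos]
  · simp only [Finset.sum_range_one, hd, pow_zero]
    rw [one_div, ← zpow_neg, neg_sub]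
    rw [Finset.sum_range_one, hd]
  · intro i hi
    interval_cases i
    rw [hd]; omega

lemma mterm_succ_eq {x : ℚ} (h0 : 0 < x) (h1 : x < 1) (k : ℕ) :
    mterm (x : ℝ) (k + 1) = -((2:ℝ) ^ (-⌊x⁻¹⌋)) * mterm ((gaussMapQ x : ℚ) : ℝ) k := by
  have hd0 : cfDigit (x : ℝ) 0 = ⌊x⁻¹⌋ := by simpa using cfDigit_cast x 0
  have ha : (1 : ℤ) ≤ ⌊x⁻¹⌋ := by
    rw [Int.le_floor]; push_cast; exact one_le_inv_iff₀.mpr ⟨h0, h1.le⟩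
  have hds : ∀ i : ℕ, cfDigit (x : ℝ) (i + 1) = cfDigit ((gaussMapQ x : ℚ) : ℝ) i := by
    intro i
    rw [cfDigit, cfDigit, Function.iterate_succ_apply, gaussMap_cast]
  have hcond : (∀ i ≤ k + 1, 0 < cfDigit (x : ℝ) i) ↔
      (∀ i ≤ k, 0 < cfDigit ((gaussMapQ x : ℚ) : ℝ) i) := by
    constructor
    · intro h i hi
      rw [← hds]
      exact h (i + 1) (by omega)
    · intro h i hi
      match i with
      | 0 => rw [hd0]; omega
      | j + 1 => rw [hds]; exact h j (by omega)
  have hsum : ∑ i ∈ Finset.range (k + 2), cfDigit (x : ℝ) i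
      = (∑ i ∈ Finset.range (k + 1), cfDigit ((gaussMapQ x : ℚ) : ℝ) i) + ⌊x⁻¹⌋ := by
    rw [Finset.sum_range_succ' (fun i => cfDigit (x : ℝ) i), hd0]
    congr 1
    exact Finset.sum_congr rfl (fun i _ => hds i)
  rw [mterm, mterm]
  by_cases hc : ∀ i ≤ k, 0 < cfDigit ((gaussMapQ x : ℚ) : ℝ) i
  · rw [if_pos (hcond.mpr hc), if_pos hc, hsum]
    have h2 : (2:ℝ) ≠ 0 := two_ne_zero
    rw [show (∑ i ∈ Finset.range (k + 1), cfDigit ((gaussMapQ x : ℚ) : ℝ) i) + ⌊x⁻¹⌋ - 1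
        = ((∑ i ∈ Finset.range (k + 1), cfDigit ((gaussMapQ x : ℚ) : ℝ) i) - 1) + ⌊x⁻¹⌋
        from by ring]
    rw [zpow_add₀ h2, zpow_neg, pow_succ]
    field_simp
  · rw [if_neg (fun h => hc (hcond.mp h)), if_neg hc, mul_zero]

lemma minkowskiQ_rec {x : ℚ} (h0 : 0 < x) (h1 : x < 1) :
    minkowskiQ (x : ℝ) = (2:ℝ) ^ ((1:ℤ) - ⌊x⁻¹⌋)
      - (2:ℝ) ^ (-⌊x⁻¹⌋) * minkowskiQ ((gaussMapQ x : ℚ) : ℝ) := by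
  obtain ⟨N, hN⟩ := exists_iter_zero _ (gaussMapQ x) rfl (gaussMapQ_nonneg x) (gaussMapQ_lt_one x)
  have hNx : gaussMapQ^[N + 1] x = 0 := by rwa [Function.iterate_succ_apply]
  rw [minkowskiQ_eq_sum hNx, minkowskiQ_eq_sum hN, Finset.sum_range_succ']
  rw [mterm_zero_eq h0 h1]
  have : ∀ k ∈ Finset.range N, mterm (x : ℝ) (k + 1)
      = -((2:ℝ) ^ (-⌊x⁻¹⌋)) * mterm ((gaussMapQ x : ℚ) : ℝ) k :=
    fun k _ => mterm_succ_eq h0 h1 k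
  rw [Finset.sum_congr rfl this, ← Finset.mul_sum]
  ring

lemma nat_lt_two_pow_pred {n : ℕ} (h : 3 ≤ n) : n < 2 ^ (n - 1) := by
  induction n, h using Nat.le_induction with
  | base => norm_num
  | succ n hn ih =>
      have : n + 1 - 1 = (n - 1) + 1 := by omega
      rw [this, pow_succ]
      omega

lemma key_invariant : ∀ n : ℕ, ∀ x : ℚ, x.num.toNat = n → 0 < x → x < 1 →
    ∃ S M : ℕ, Odd M ∧ 0 < M ∧ M ≤ 2 ^ S ∧
      minkowskiQ (x : ℝ) = (M : ℝ) / 2 ^ S ∧ x.den ≤ 2 ^ S ∧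
      (x = (M : ℚ) / 2 ^ S → x = 1 / 2) := by
  intro n
  induction n using Nat.strong_induction_on with
  | _ n ih =>
  intro x hn h0 h1
  set a : ℤ := ⌊x⁻¹⌋ with ha_def
  set y : ℚ := gaussMapQ x with hy_def
  have hxinv : (1:ℚ) < x⁻¹ := one_lt_inv_iff₀.mpr ⟨h0, h1⟩
  have ha1 : 1 ≤ a := by rw [ha_def, Int.le_floor]; exact_mod_cast hxinv.le
  have hay : (a : ℚ) + y = x⁻¹ := Int.floor_add_fract _
  have hx_eq : x = ((a : ℚ) + y)⁻¹ := by rw [hay, inv_inv]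
  have hrec := minkowskiQ_rec h0 h1
  set aN : ℕ := a.toNat with haN_def
  have haa : (aN : ℤ) = a := Int.toNat_of_nonneg (by omega)
  have haN1 : 1 ≤ aN := by omega
  have h2R : (2:ℝ) ≠ 0 := two_ne_zero
  have hp1 : (2:ℝ) ^ ((1:ℤ) - a) = 2 / 2 ^ aN := by
    rw [← haa, zpow_sub₀ h2R, zpow_one, zpow_natCast]
  have hp2 : (2:ℝ) ^ (-a) = 1 / 2 ^ aN := by
    rw [← haa, zpow_neg, zpow_natCast, one_div]
  by_cases hy0 : y = 0
  · -- x = 1/a, a ≥ 2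
    have hxa : x = (a : ℚ)⁻¹ := by rw [hx_eq, hy0, add_zero]
    have ha2 : 2 ≤ a := by
      by_contra hcon
      have : a = 1 := by omega
      rw [this] at hxa
      simp at hxa
      rw [hxa] at h1
      exact lt_irrefl _ h1
    -- minkowskiQ x = 1 / 2 ^ (aN - 1)
    have hy0' : gaussMapQ x = 0 := hy0
    have haN2 : 2 ≤ aN := by omega
    have hmq : minkowskiQ (x : ℝ) = (1 : ℝ) / 2 ^ (aN - 1) := by
      rw [hrec, ← ha_def, hy0', minkowskiQ_zero, mul_zero, sub_zero, hp1]
      rw [show aN = (aN - 1) + 1 from by omega, pow_succ]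
      field_simp
      ring_nf
      rw [show 1 + (aN - 1) - 1 = aN - 1 from by omega]
    refine ⟨aN - 1, 1, odd_one, one_pos, Nat.one_le_two_pow, by push_cast [hmq]; ring, ?_, ?_⟩
    · -- x.den ≤ 2 ^ (aN - 1)
      have hden : (x.den : ℤ) ∣ a := by
        have : x = (1 : ℤ) / (a : ℚ) := by rw [hxa]; push_cast; ring
        have h2 := Rat.den_dvd (1 : ℤ) a
        rwa [Rat.divInt_eq_div, ← this] at h2
      have : x.den ≤ aN := by
        have := Int.le_of_dvd (by omega) hden
        omega
      rcases Nat.lt_or_ge aN 3 with h3 | h3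
      · have : aN = 2 := by omega
        calc x.den ≤ aN := ‹x.den ≤ aN›
        _ ≤ 2 ^ (aN - 1) := by rw [this]; norm_num
      · have := nat_lt_two_pow_pred h3
        omega
    · -- equality case
      intro hx2
      push_cast at hx2
      have hae : (a : ℚ) = 2 ^ (aN - 1) := by
        rw [hxa] at hx2
        rw [inv_eq_one_div] at hx2
        field_simp at hx2
        rw [hx2]
      have haeN : aN = 2 ^ (aN - 1) := by exact_mod_cast haa ▸ hae
      have : aN = 2 := by
        rcases Nat.lt_or_ge aN 3 with h3 | h3
        · omega
        · have := nat_lt_two_pow_pred h3; omega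
      rw [hxa, ← haa, this]
      norm_num
  · -- step case: y ≠ 0
    have hy0lt : 0 < y := lt_of_le_of_ne (gaussMapQ_nonneg x) (Ne.symm hy0)
    have hylt1 : y < 1 := gaussMapQ_lt_one x
    have hnumlt : y.num.toNat < n := by
      have h2 : y.num < x.num := by
        simpa [hy_def, gaussMapQ] using Rat.fract_inv_num_lt_num_of_pos h0
      have h3 := Rat.num_pos.mpr h0
      omega
    obtain ⟨S', M', hModd, hMpos, hMle, hmy, hyden, hyeq⟩ :=
      ih y.num.toNat hnumlt y rfl hy0lt hylt1
    have hM'lt : M' < 2 ^ (S' + 1) := lt_of_le_of_lt hMle (by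
      rw [pow_succ]; omega)
    set M : ℕ := 2 ^ (S' + 1) - M' with hM_def
    set S : ℕ := S' + aN with hS_def
    have hModdM : Odd M := Nat.Even.sub_odd hM'lt.le ⟨2 ^ S', by ring⟩ hModd
    have hMposM : 0 < M := by omega
    have hMleM : M ≤ 2 ^ S := by
      have : 2 ^ (S' + 1) ≤ 2 ^ S := Nat.pow_le_pow_right (by norm_num) (by omega)
      omega
    have hmq : minkowskiQ (x : ℝ) = (M : ℝ) / 2 ^ S := by
      rw [hrec, ← ha_def, ← hy_def, hmy, hp1, hp2, hM_def, hS_def]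
      push_cast [Nat.cast_sub hM'lt.le]
      rw [pow_add]
      have hpow1 : (2:ℝ) ^ S' ≠ 0 := by positivity
      have hpow2 : (2:ℝ) ^ aN ≠ 0 := by positivity
      field_simp
      ring
    -- denominator bound
    set A : ℤ := a * y.den + y.num with hA_def
    have hynum : 0 < y.num := Rat.num_pos.mpr hy0lt
    have hyd : 0 < (y.den : ℤ) := by exact_mod_cast y.pos
    have hApos : 0 < A := by positivity
    have hden0 : ((y.den : ℤ) : ℚ) ≠ 0 := by
      push_cast
      exact_mod_cast Nat.cast_ne_zero.mpr y.den_nz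
    have hay2 : (a : ℚ) + y = (A : ℚ) / ((y.den : ℤ) : ℚ) := by
      rw [eq_div_iff hden0]
      have hyn : y * ((y.den : ℕ) : ℚ) = (y.num : ℚ) := by
        have hd : ((y.den : ℕ) : ℚ) ≠ 0 := by exact_mod_cast y.den_nz
        calc y * ((y.den : ℕ) : ℚ) = ((y.num : ℚ) / y.den) * y.den := by
              rw [Rat.num_div_den]
        _ = (y.num : ℚ) := by field_simp
      rw [hA_def]
      push_cast
      push_cast at hyn
      rw [add_mul, hyn]
    have hxA : x = ((y.den : ℤ) : ℚ) / (A : ℚ) := by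
      rw [hx_eq, hay2, inv_div]
    have hdvd : (x.den : ℤ) ∣ A := by
      have h4 := Rat.den_dvd (y.den : ℤ) A
      rwa [Rat.divInt_eq_div, ← hxA] at h4
    have hxden_le : (x.den : ℤ) ≤ A := Int.le_of_dvd hApos hdvd
    have hnd : y.num < (y.den : ℤ) := Rat.lt_one_iff_num_lt_denom.mpr hylt1
    have hA_lt : A < (2 : ℤ) ^ S := by
      have h5 : A < (a + 1) * y.den := by
        rw [hA_def, add_mul, one_mul]
        omega
      have h6 : (a + 1) ≤ (2 : ℤ) ^ aN := by
        have := Nat.lt_two_pow_self (n := aN)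
        rw [← haa]
        exact_mod_cast this
      have h7 : (y.den : ℤ) ≤ (2 : ℤ) ^ S' := by exact_mod_cast hyden
      calc A < (a + 1) * y.den := h5
        _ ≤ (2 : ℤ) ^ aN * (2 : ℤ) ^ S' :=
            mul_le_mul h6 h7 hyd.le (by positivity)
        _ = (2 : ℤ) ^ S := by rw [← pow_add, hS_def, Nat.add_comm]
    have hxden_lt : x.den < 2 ^ S := by
      have : (x.den : ℤ) < (2 : ℤ) ^ S := lt_of_le_of_lt hxden_le hA_lt
      exact_mod_cast this
    refine ⟨S, M, hModdM, hMposM, hMleM, hmq, hxden_lt.le, ?_⟩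
    intro hxe
    exfalso
    -- cross multiply
    have hxe' : (x.num : ℚ) / (x.den : ℚ) = (M : ℚ) / 2 ^ S := by
      rw [Rat.num_div_den]; exact_mod_cast hxe
    have hdQ : ((x.den : ℕ) : ℚ) ≠ 0 := by exact_mod_cast x.den_nz
    have h2SQ : (2 : ℚ) ^ S ≠ 0 := by positivity
    rw [div_eq_div_iff hdQ h2SQ] at hxe'
    have hcross : x.num * 2 ^ S = (M : ℤ) * (x.den : ℤ) := by exact_mod_cast hxe'
    -- x.den divides 2 ^ S
    have hdvd2 : x.den ∣ 2 ^ S := by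
      have h11 : x.den ∣ x.num.natAbs * 2 ^ S := by
        have : (x.den : ℤ) ∣ x.num * 2 ^ S := by
          rw [hcross]; exact dvd_mul_left _ _
        have h12 := Int.natAbs_dvd_natAbs.mpr this
        simpa [Int.natAbs_mul, Int.natAbs_pow] using h12
      exact (Nat.Coprime.dvd_of_dvd_mul_left x.reduced.symm) h11
    obtain ⟨t, ht, hdeq⟩ := (Nat.dvd_prime_pow Nat.prime_two).mp hdvd2
    have htS : t < S := by
      by_contra hcon
      have : t = S := by omega
      rw [this] at hdeq
      omega
    -- M = x.num * 2 ^ (S - t), even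
    have h2 : (2:ℤ) ∣ (M : ℤ) := by
      have hsplit : (2:ℤ) ^ S = 2 ^ t * 2 ^ (S - t) := by
        rw [← pow_add]; congr 1; omega
      have h13 : x.num * (2 ^ t * 2 ^ (S - t)) = (M : ℤ) * 2 ^ t := by
        rw [← hsplit, hcross, hdeq]; push_cast; ring
      have h14 : x.num * 2 ^ (S - t) = (M : ℤ) := by
        have h2t : (2:ℤ) ^ t ≠ 0 := by positivity
        rw [mul_comm (2 ^ t : ℤ), ← mul_assoc] at h13
        exact mul_right_cancel₀ h2t (by linarith [h13])
      rw [← h14]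
      exact Dvd.dvd.mul_left (dvd_pow_self 2 (by omega)) _
    have : (2:ℕ) ∣ M := by exact_mod_cast h2
    rw [Nat.odd_iff] at hModdM
    omega

lemma minkowskiQ_one : minkowskiQ ((1 : ℚ) : ℝ) = 1 := by
  have hN : gaussMapQ^[1] (1 : ℚ) = 0 := by
    simp [gaussMapQ, Int.fract]
  rw [minkowskiQ_eq_sum hN, Finset.sum_range_one, mterm]
  have hd : cfDigit ((1:ℚ) : ℝ) 0 = 1 := by
    rw [cfDigit_cast]
    norm_num
  rw [if_pos]
  · rw [Finset.sum_range_one, hd]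
    norm_num
  · intro i hi
    interval_cases i
    rw [hd]; omega

lemma minkowskiQ_half : minkowskiQ (((1 : ℚ)/2 : ℚ) : ℝ) = 1/2 := by
  have h0 : (0:ℚ) < 1/2 := by norm_num
  have h1 : (1:ℚ)/2 < 1 := by norm_num
  have hfloor : ⌊((1:ℚ)/2)⁻¹⌋ = 2 := by norm_num
  have hg : gaussMapQ ((1:ℚ)/2) = 0 := by
    simp [gaussMapQ, Int.fract]
  rw [minkowskiQ_rec h0 h1, hfloor, hg, minkowskiQ_zero, mul_zero, sub_zero]
  norm_num

theorem rational_fixed_points :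
    ∀ x : ℚ, (x : ℝ) ∈ Set.Icc (0 : ℝ) 1 →
      (minkowskiQ (x : ℝ) = (x : ℝ) ↔ x = 0 ∨ x = 1 / 2 ∨ x = 1) := by
  intro x hx
  obtain ⟨hx0, hx1⟩ := hx
  have hx0' : (0:ℚ) ≤ x := by exact_mod_cast hx0
  have hx1' : x ≤ 1 := by exact_mod_cast hx1
  constructor
  · intro hfix
    rcases eq_or_lt_of_le hx0' with h0 | h0
    · exact Or.inl h0.symm
    rcases eq_or_lt_of_le hx1' with h1 | h1
    · exact Or.inr (Or.inr h1)
    obtain ⟨S, M, hModd, hMpos, hMle, hmq, hden, heq⟩ :=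
      key_invariant x.num.toNat x rfl h0 h1
    refine Or.inr (Or.inl ?_)
    have : (x : ℝ) = ((((M : ℚ)) / 2 ^ S : ℚ) : ℝ) := by
      rw [← hfix, hmq]; push_cast; ring
    have hxq : x = (M : ℚ) / 2 ^ S := by exact_mod_cast this
    exact heq hxq
  · rintro (rfl | rfl | rfl)
    · rw [Rat.cast_zero]
      exact_mod_cast minkowskiQ_zero
    · rw [show ((1:ℚ)/2) = ((1:ℚ)/2 : ℚ) from rfl]
      rw [minkowskiQ_half]
      push_cast
      ring
    · rw [minkowskiQ_one, Rat.cast_one]
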